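/- Let I = [0,1), 0 < ε < 1, α ∈ (0, 1/2), and write θ := 1 − 2α in binary as θ = ∑_{j≥1} 2^{−j} b_j with b_j ∈ {0,1}. Let I_j = [e_j, e_{j+1}) with e_j = 1/2 − 2^{−j}. Define the operator T on L¹(I) by Tf = (1−ε)∑_{j≥1} b_j 1_{I_j}·S_{I_j}f + (1−ε)1_{I_+}·g_+, where S_J f denotes the rescaling of f to J and g_+ ∈ L¹ is a fixed nonnegative function on I_+ = [1/2,1). Then T is a contraction on L¹(I) with contraction constant ξ = (1−ε)(1−2α)/2 < 1, and hence T has a unique fixed point in L¹(I). -/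

import Mathlib

open MeasureTheory

namespace CFPaux

open Set

noncomputable def ee : ℕ → ℝ := fun j => 1 / 2 - ((2 : ℝ) ^ j)⁻¹

lemma ee_succ (n : ℕ) : ee (n + 1) = ee n + ((2 : ℝ) ^ (n + 1))⁻¹ := by
  have h2 : ((2 : ℝ) ^ n) ≠ 0 := by positivity
  simp only [ee, pow_succ]
  field_simp
  ring

lemma ee_strictMono : StrictMono ee := by
  apply strictMono_nat_of_lt_succ
  intro n
  have : (0:ℝ) < ((2 : ℝ) ^ (n + 1))⁻¹ := by positivity
  rw [ee_succ]; linarith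

lemma ee_one : ee 1 = 0 := by norm_num [ee]

lemma ee_lt_half (j : ℕ) : ee j < 1 / 2 := by
  have : (0:ℝ) < ((2 : ℝ) ^ j)⁻¹ := by positivity
  simp only [ee]; linarith

lemma ee_nonneg (j : ℕ) : 0 ≤ ee (j + 1) := by
  rw [← ee_one]
  exact ee_strictMono.monotone (by omega)

/-- the `j`-th interval -/
def Sj (j : ℕ) : Set ℝ := Ico (ee (j + 1)) (ee (j + 2))

lemma Sj_disjoint : Pairwise (Function.onFun Disjoint Sj) := by
  have key : ∀ i j : ℕ, i < j → Disjoint (Sj i) (Sj j) := by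
    intro i j hij
    apply Set.Ico_disjoint_Ico.2
    have h1 : ee (i + 2) ≤ ee (j + 1) := ee_strictMono.monotone (by omega)
    exact le_trans (min_le_left _ _) (le_trans h1 (le_max_right _ _))
  intro i j hij
  rcases lt_or_gt_of_ne hij with h | h
  · exact key i j h
  · exact (key j i h).symm

lemma Sj_iUnion : (⋃ j, Sj j) = Ico (0:ℝ) (1 / 2) := by
  ext t
  simp only [mem_iUnion, Sj, mem_Ico]
  constructor
  · rintro ⟨j, h1, h2⟩
    exact ⟨le_trans (ee_nonneg j) h1, lt_of_lt_of_le h2 (ee_lt_half _).le⟩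
  · rintro ⟨h0, h2⟩
    have hex : ∃ n, t < ee (n + 2) := by
      obtain ⟨n, hn⟩ := exists_pow_lt_of_lt_one (by linarith : (0:ℝ) < 1 / 2 - t)
        (by norm_num : (1:ℝ) / 2 < 1)
      refine ⟨n, ?_⟩
      have h1 : ((2:ℝ) ^ (n + 2))⁻¹ ≤ ((2:ℝ) ^ n)⁻¹ := by
        apply inv_anti₀ (by positivity)
        exact pow_le_pow_right₀ one_le_two (by omega)
      have h2' : ((2:ℝ) ^ n)⁻¹ = (1 / 2 : ℝ) ^ n := by
        rw [one_div, inv_pow]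
      simp only [ee]
      rw [h2'] at h1
      linarith
    have hN : t < ee (Nat.find hex + 2) := Nat.find_spec hex
    have hN' : ee (Nat.find hex + 1) ≤ t := by
      rcases Nat.eq_zero_or_pos (Nat.find hex) with h | h
      · rw [h]; rwa [ee_one]
      · obtain ⟨M, hM⟩ := Nat.exists_eq_succ_of_ne_zero h.ne'
        have hmin := Nat.find_min hex (by omega : M < Nat.find hex)
        push_neg at hmin
        rw [hM]
        exact hmin
    exact ⟨Nat.find hex, hN', hN⟩

lemma Sj_subset (j : ℕ) : Sj j ⊆ Ico (0:ℝ) (1 / 2) := by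
  rw [← Sj_iUnion]; exact subset_iUnion Sj j

/-- evaluation of the tsum at a point of `Sj j` -/
lemma tsum_eval (b : ℕ → ℝ) (f : ℝ → ℝ) {t : ℝ} {j : ℕ} (ht : t ∈ Sj j) :
    (∑' k, b (k + 1) * (Ico (ee (k + 1)) (ee (k + 2))).indicator
        (fun s => f ((s - ee (k + 1)) * 2 ^ (k + 2))) t)
      = b (j + 1) * f ((t - ee (j + 1)) * 2 ^ (j + 2)) := by
  rw [tsum_eq_single j]
  · have ht' : t ∈ Ico (ee (j + 1)) (ee (j + 2)) := ht
    rw [indicator_of_mem ht']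
  · intro k hk
    rw [indicator_of_notMem, mul_zero]
    intro htk
    exact Set.disjoint_left.mp (Sj_disjoint hk) htk ht

lemma tsum_eval_zero (b : ℕ → ℝ) (f : ℝ → ℝ) {t : ℝ} (ht : t ∉ Ico (0:ℝ) (1 / 2)) :
    (∑' k, b (k + 1) * (Ico (ee (k + 1)) (ee (k + 2))).indicator
        (fun s => f ((s - ee (k + 1)) * 2 ^ (k + 2))) t) = 0 := by
  have : ∀ k : ℕ, b (k + 1) * (Ico (ee (k + 1)) (ee (k + 2))).indicator
      (fun s => f ((s - ee (k + 1)) * 2 ^ (k + 2))) t = 0 := by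
    intro k
    rw [indicator_of_notMem, mul_zero]
    intro htk
    exact ht (Sj_subset k htk)
  simp only [this, tsum_zero]

lemma mem_aff {t : ℝ} {j : ℕ} (ht : t ∈ Sj j) :
    (t - ee (j + 1)) * 2 ^ (j + 2) ∈ Ico (0:ℝ) 1 := by
  obtain ⟨h1, h2⟩ := ht
  have hc : (0:ℝ) < 2 ^ (j + 2) := by positivity
  constructor
  · exact mul_nonneg (by linarith) hc.le
  · have hβ : ee (j + 2) = ee (j + 1) + ((2:ℝ) ^ (j + 2))⁻¹ := ee_succ (j + 1)
    have h3 : t - ee (j + 1) < ((2:ℝ) ^ (j + 2))⁻¹ := by rw [hβ] at h2; linarith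
    calc (t - ee (j + 1)) * 2 ^ (j + 2) < ((2:ℝ) ^ (j + 2))⁻¹ * 2 ^ (j + 2) :=
          mul_lt_mul_of_pos_right h3 hc
      _ = 1 := inv_mul_cancel₀ hc.ne'

lemma not_mem_aff {t : ℝ} {j : ℕ} (ht : t ∉ Sj j) :
    (t - ee (j + 1)) * 2 ^ (j + 2) ∉ Ico (0:ℝ) 1 := by
  intro hmem
  apply ht
  obtain ⟨h1, h2⟩ := hmem
  have hc : (0:ℝ) < 2 ^ (j + 2) := by positivity
  constructor
  · nlinarith
  · have hβ : ee (j + 2) = ee (j + 1) + ((2:ℝ) ^ (j + 2))⁻¹ := ee_succ (j + 1)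
    have h3 : t - ee (j + 1) < ((2:ℝ) ^ (j + 2))⁻¹ := by
      rw [show ((2:ℝ) ^ (j + 2))⁻¹ = 1 / 2 ^ (j + 2) by rw [one_div]]
      rw [lt_div_iff₀ hc]
      exact h2
    rw [hβ]; linarith

/-- change of variables -/
lemma cov (q : ℝ → ℝ) (j : ℕ) :
    (∫ t in Ico (ee (j + 1)) (ee (j + 2)), q ((t - ee (j + 1)) * 2 ^ (j + 2))) =
      ((2:ℝ) ^ (j + 2))⁻¹ * ∫ s in Ico (0:ℝ) 1, q s := by

  set q' : ℝ → ℝ := (Ico (0:ℝ) 1).indicator q with hq'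
  have hc : (0:ℝ) < 2 ^ (j + 2) := by positivity
  have step1 : (∫ t in Ico (ee (j + 1)) (ee (j + 2)), q ((t - ee (j + 1)) * 2 ^ (j + 2))) =
      ∫ t in Ico (ee (j + 1)) (ee (j + 2)), q' ((t - ee (j + 1)) * 2 ^ (j + 2)) := by
    apply setIntegral_congr_fun measurableSet_Ico
    intro t ht
    simp only [hq', indicator_of_mem (mem_aff ht)]
  have step2 : (∫ t in Ico (ee (j + 1)) (ee (j + 2)), q' ((t - ee (j + 1)) * 2 ^ (j + 2))) =
      ∫ t : ℝ, q' ((t - ee (j + 1)) * 2 ^ (j + 2)) := by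
    rw [← integral_indicator measurableSet_Ico]
    congr 1
    funext t
    by_cases h : t ∈ Sj j
    · have h' : t ∈ Ico (ee (j + 1)) (ee (j + 2)) := h
      rw [indicator_of_mem h']
    · have h' : t ∉ Ico (ee (j + 1)) (ee (j + 2)) := h
      rw [indicator_of_notMem h', hq', indicator_of_notMem (not_mem_aff h)]
  have step3 : (∫ t : ℝ, q' ((t - ee (j + 1)) * 2 ^ (j + 2))) =
      ∫ t : ℝ, q' (t * 2 ^ (j + 2)) :=
    integral_sub_right_eq_self (fun t => q' (t * 2 ^ (j + 2))) (ee (j + 1))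
  have step4 : (∫ t : ℝ, q' (t * 2 ^ (j + 2))) = ((2:ℝ) ^ (j + 2))⁻¹ * ∫ s, q' s := by
    rw [Measure.integral_comp_mul_right q' (2 ^ (j + 2))]
    rw [abs_of_pos (inv_pos.2 hc), smul_eq_mul]
  rw [step1, step2, step3, step4, integral_indicator measurableSet_Ico]


/-- rescaled sum operator -/
noncomputable def Pb (b : ℕ → ℝ) (f : ℝ → ℝ) (t : ℝ) : ℝ :=
  ∑' j : ℕ, b (j + 1) * (Ico (ee (j + 1)) (ee (j + 2))).indicator
      (fun s => f ((s - ee (j + 1)) * 2 ^ (j + 2))) t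

lemma Sj_meas (j : ℕ) : MeasurableSet (Sj j) := measurableSet_Ico

lemma Pb_eval {b : ℕ → ℝ} (f : ℝ → ℝ) {t : ℝ} {j : ℕ} (ht : t ∈ Sj j) :
    Pb b f t = b (j + 1) * f ((t - ee (j + 1)) * 2 ^ (j + 2)) :=
  tsum_eval b f ht

lemma Pb_zero {b : ℕ → ℝ} (f : ℝ → ℝ) {t : ℝ} (ht : t ∉ Ico (0:ℝ) (1 / 2)) :
    Pb b f t = 0 :=
  tsum_eval_zero b f ht

lemma cov' (q : ℝ → ℝ) (j : ℕ) :
    (∫ t in Sj j, q ((t - ee (j + 1)) * 2 ^ (j + 2))) =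
      ((2:ℝ) ^ (j + 2))⁻¹ * ∫ s in Ico (0:ℝ) 1, q s :=
  cov q j

lemma key {b : ℕ → ℝ} (hb : ∀ j, 0 ≤ b j ∧ b j ≤ 1) (d : ℝ → ℝ)
    (hd : IntegrableOn d (Ico (0:ℝ) 1)) :
    IntegrableOn (Pb b d) (Ico (0:ℝ) 1) ∧
    ∫ t in Ico (0:ℝ) 1, |Pb b d t| =
      (∑' j : ℕ, b (j + 1) * ((2:ℝ) ^ (j + 2))⁻¹) * ∫ t in Ico (0:ℝ) 1, |d t| := by
  set C : ℝ := ∫ t in Ico (0:ℝ) 1, |d t| with hCdef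
  have hC : 0 ≤ C := integral_nonneg fun t => abs_nonneg _
  set d' : ℝ → ℝ := (Ico (0:ℝ) 1).indicator d with hd'def
  have hd' : Integrable d' := (integrable_indicator_iff measurableSet_Ico).2 hd
  have hcomp : ∀ j : ℕ, Integrable (fun t : ℝ => d' ((t - ee (j + 1)) * 2 ^ (j + 2))) := by
    intro j
    have h1 : Integrable (fun u : ℝ => d' (u * 2 ^ (j + 2))) :=
      hd'.comp_mul_right' (by positivity)
    exact h1.comp_sub_right (ee (j + 1))
  have heq : ∀ j : ℕ, EqOn (Pb b d)
      (fun t => b (j + 1) * d' ((t - ee (j + 1)) * 2 ^ (j + 2))) (Sj j) := by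
    intro j t ht
    rw [Pb_eval d ht]
    simp only [hd'def, indicator_of_mem (mem_aff ht)]
  have hintOn : ∀ j : ℕ, IntegrableOn (Pb b d) (Sj j) := by
    intro j
    have h2 : IntegrableOn (fun t => b (j + 1) * d' ((t - ee (j + 1)) * 2 ^ (j + 2))) (Sj j) :=
      ((hcomp j).const_mul _).integrableOn
    exact IntegrableOn.congr_fun h2 (fun t ht => (heq j ht).symm) measurableSet_Ico
  have hnorm : ∀ j : ℕ, (∫ t in Sj j, ‖Pb b d t‖) =
      b (j + 1) * (((2:ℝ) ^ (j + 2))⁻¹ * C) := by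
    intro j
    have e1 : (∫ t in Sj j, ‖Pb b d t‖) =
        ∫ t in Sj j, (fun s => b (j + 1) * |d s|) ((t - ee (j + 1)) * 2 ^ (j + 2)) := by
      apply setIntegral_congr_fun (measurableSet_Ico : MeasurableSet (Ico (ee (j+1)) (ee (j+2))))
      intro t ht
      simp only [Real.norm_eq_abs, Pb_eval d ht, abs_mul, abs_of_nonneg (hb (j + 1)).1]
    rw [e1, cov' (fun s => b (j + 1) * |d s|) j, integral_const_mul]
    ring
  have hsumgeo : Summable (fun j : ℕ => ((2:ℝ) ^ (j + 2))⁻¹ * C) := by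
    have hfe : (fun j : ℕ => ((2:ℝ) ^ (j + 2))⁻¹ * C) =
        fun j : ℕ => ((2:ℝ)⁻¹) ^ j * (((2:ℝ)⁻¹) ^ 2 * C) := by
      funext j
      rw [← inv_pow, pow_add]
      ring
    rw [hfe]
    exact (summable_geometric_of_lt_one (by norm_num) (by norm_num)).mul_right _
  have hsum : Summable (fun j : ℕ => b (j + 1) * (((2:ℝ) ^ (j + 2))⁻¹ * C)) := by
    apply Summable.of_nonneg_of_le _ _ hsumgeo
    · intro j
      exact mul_nonneg (hb _).1 (mul_nonneg (by positivity) hC)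
    · intro j
      exact mul_le_of_le_one_left (mul_nonneg (by positivity) hC) (hb _).2
  have hsum' : Summable (fun j : ℕ => ∫ t in Sj j, ‖Pb b d t‖) := by
    rw [summable_congr hnorm]
    exact hsum
  have hUnion : IntegrableOn (Pb b d) (Ico (0:ℝ) (1 / 2)) := by
    rw [← Sj_iUnion]
    exact integrableOn_iUnion_of_summable_integral_norm hintOn hsum'
  have hright : IntegrableOn (Pb b d) (Ico (1/2:ℝ) 1) := by
    apply IntegrableOn.congr_fun
      (integrableOn_zero : IntegrableOn (fun _ : ℝ => (0:ℝ)) (Ico (1/2:ℝ) 1) volume) _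
      measurableSet_Ico
    intro t ht
    refine (Pb_zero d ?_).symm
    intro h
    exact absurd h.2 (not_lt.2 ht.1)
  have hint01 : IntegrableOn (Pb b d) (Ico (0:ℝ) 1) := by
    have := hUnion.union hright
    rwa [Set.Ico_union_Ico_eq_Ico (by norm_num) (by norm_num)] at this
  refine ⟨hint01, ?_⟩
  have hsplit : (∫ t in Ico (0:ℝ) 1, |Pb b d t|) =
      (∫ t in Ico (0:ℝ) (1/2), |Pb b d t|) + ∫ t in Ico (1/2:ℝ) 1, |Pb b d t| := by
    rw [← setIntegral_union (Set.Ico_disjoint_Ico.2 (by norm_num)) measurableSet_Ico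
      hUnion.abs hright.abs,
      Set.Ico_union_Ico_eq_Ico (by norm_num : (0:ℝ) ≤ 1/2) (by norm_num : (1/2:ℝ) ≤ 1)]
  have hrzero : (∫ t in Ico (1/2:ℝ) 1, |Pb b d t|) = 0 := by
    rw [setIntegral_congr_fun measurableSet_Ico
      (g := fun _ : ℝ => (0:ℝ)) ?_, integral_zero]
    intro t ht
    show |Pb b d t| = 0
    rw [Pb_zero d (fun h => absurd h.2 (not_lt.2 ht.1)), abs_zero]
  have hleft : (∫ t in Ico (0:ℝ) (1/2), |Pb b d t|) =
      ∑' j : ℕ, ∫ t in Sj j, |Pb b d t| := by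
    have h3 : IntegrableOn (fun t => |Pb b d t|) (⋃ j, Sj j) volume := by
      rw [Sj_iUnion]; exact hUnion.abs
    have h4 := integral_iUnion (μ := volume) (s := Sj) (f := fun t => |Pb b d t|)
      Sj_meas Sj_disjoint h3
    rw [← Sj_iUnion]
    exact h4
  have hterm : ∀ j : ℕ, (∫ t in Sj j, |Pb b d t|) = b (j + 1) * (((2:ℝ) ^ (j + 2))⁻¹ * C) := by
    intro j
    rw [← hnorm j]
    simp only [Real.norm_eq_abs]
  rw [hsplit, hrzero, hleft, add_zero, tsum_congr hterm]
  simp_rw [← mul_assoc]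
  exact tsum_mul_right

end CFPaux

open CFPaux

/-- Let `I = [0,1)`, `0 < ε < 1`, `a ∈ (0, 1/2)`, and write `θ = 1 - 2a` in binary as
`θ = ∑_{j≥1} 2⁻ʲ bⱼ` with `bⱼ ∈ {0,1}`.  With `eⱼ = 1/2 - 2⁻ʲ`, `Iⱼ = [eⱼ, e_{j+1})` and
`S_J f` the rescaling of `f` to `J`, the operator
`Tf = (1-ε) ∑_{j≥1} bⱼ 1_{Iⱼ} S_{Iⱼ} f + (1-ε) 1_{[1/2,1)} g₊`
is a contraction on `L¹(I)` with constant `ξ = (1-ε)(1-2a)/2 < 1`, and hence has a unique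
(up to a.e. equality) fixed point in `L¹(I)`. -/
theorem contraction_fixed_point (ε a : ℝ) (hε : 0 < ε) (hε1 : ε < 1)
    (ha : 0 < a) (ha2 : a < 1 / 2)
    (b : ℕ → ℝ) (hb : ∀ j, b j = 0 ∨ b j = 1)
    (hbin : ∑' j : ℕ, b (j + 1) * ((2 : ℝ) ^ (j + 1))⁻¹ = 1 - 2 * a)
    (g : ℝ → ℝ) (hg : ∀ t, 0 ≤ g t) (hgint : IntegrableOn g (Set.Ico (1/2 : ℝ) 1))
    (e : ℕ → ℝ) (he : e = fun j => 1 / 2 - ((2 : ℝ) ^ j)⁻¹)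
    (T : (ℝ → ℝ) → ℝ → ℝ)
    (hT : T = fun f t =>
      (1 - ε) * (∑' j : ℕ, b (j + 1) *
          (Set.Ico (e (j + 1)) (e (j + 2))).indicator
            (fun s => f ((s - e (j + 1)) * 2 ^ (j + 2))) t) +
      (1 - ε) * (Set.Ico (1/2 : ℝ) 1).indicator g t)
    (ξ : ℝ) (hξ : ξ = (1 - ε) * (1 - 2 * a) / 2) :
    (∀ f₁ f₂ : ℝ → ℝ, IntegrableOn f₁ (Set.Ico (0:ℝ) 1) →
        IntegrableOn f₂ (Set.Ico (0:ℝ) 1) →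
      ∫ t in Set.Ico (0:ℝ) 1, |T f₁ t - T f₂ t| ≤ ξ * ∫ t in Set.Ico (0:ℝ) 1, |f₁ t - f₂ t|) ∧
    ξ < 1 ∧
    (∃ f : ℝ → ℝ, IntegrableOn f (Set.Ico (0:ℝ) 1) ∧
      (∀ᵐ t ∂(volume.restrict (Set.Ico (0:ℝ) 1)), T f t = f t) ∧
      ∀ h : ℝ → ℝ, IntegrableOn h (Set.Ico (0:ℝ) 1) →
        (∀ᵐ t ∂(volume.restrict (Set.Ico (0:ℝ) 1)), T h t = h t) →
        ∀ᵐ t ∂(volume.restrict (Set.Ico (0:ℝ) 1)), h t = f t) := by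
  have hee : e = ee := he
  subst hee
  have hb' : ∀ j, 0 ≤ b j ∧ b j ≤ 1 := by
    intro j; rcases hb j with h | h <;> simp [h]
  have hTapp : ∀ f t, T f t =
      (1 - ε) * Pb b f t + (1 - ε) * (Set.Ico (1/2:ℝ) 1).indicator g t := by
    intro f t; rw [hT]; rfl
  have hsum2 : (∑' j : ℕ, b (j + 1) * ((2:ℝ) ^ (j + 2))⁻¹) = (1 - 2 * a) / 2 := by
    have hterm : ∀ j : ℕ, b (j + 1) * ((2:ℝ) ^ (j + 2))⁻¹
        = (b (j + 1) * ((2:ℝ) ^ (j + 1))⁻¹) * 2⁻¹ := by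
      intro j
      rw [pow_succ, mul_inv]
      ring
    rw [tsum_congr hterm, tsum_mul_right, hbin]
    ring
  have h1ε : (0:ℝ) ≤ 1 - ε := by linarith
  -- the exact contraction identity
  have hcontr : ∀ f₁ f₂ : ℝ → ℝ, IntegrableOn f₁ (Set.Ico (0:ℝ) 1) →
      IntegrableOn f₂ (Set.Ico (0:ℝ) 1) →
      (∫ t in Set.Ico (0:ℝ) 1, |T f₁ t - T f₂ t|)
        = ξ * ∫ t in Set.Ico (0:ℝ) 1, |f₁ t - f₂ t| := by
    intro f₁ f₂ h1 h2
    have hdint : IntegrableOn (fun s => f₁ s - f₂ s) (Set.Ico (0:ℝ) 1) := h1.sub h2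
    have hlin : ∀ t, T f₁ t - T f₂ t = (1 - ε) * Pb b (fun s => f₁ s - f₂ s) t := by
      intro t
      rw [hTapp f₁ t, hTapp f₂ t]
      have hPd : Pb b f₁ t - Pb b f₂ t = Pb b (fun s => f₁ s - f₂ s) t := by
        by_cases ht : t ∈ Set.Ico (0:ℝ) (1/2)
        · rw [← Sj_iUnion] at ht
          obtain ⟨j, htj⟩ := Set.mem_iUnion.1 ht
          rw [Pb_eval f₁ htj, Pb_eval f₂ htj, Pb_eval _ htj]
          ring
        · rw [Pb_zero f₁ ht, Pb_zero f₂ ht, Pb_zero _ ht]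
          ring
      rw [← hPd]
      ring
    calc (∫ t in Set.Ico (0:ℝ) 1, |T f₁ t - T f₂ t|)
        = ∫ t in Set.Ico (0:ℝ) 1, (1 - ε) * |Pb b (fun s => f₁ s - f₂ s) t| := by
          refine integral_congr_ae (Filter.Eventually.of_forall fun t => ?_)
          show |T f₁ t - T f₂ t| = (1 - ε) * |Pb b (fun s => f₁ s - f₂ s) t|
          rw [hlin t, abs_mul, abs_of_nonneg h1ε]
      _ = (1 - ε) * ∫ t in Set.Ico (0:ℝ) 1, |Pb b (fun s => f₁ s - f₂ s) t| :=
          integral_const_mul _ _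
      _ = (1 - ε) * (((1 - 2 * a) / 2) * ∫ t in Set.Ico (0:ℝ) 1, |f₁ t - f₂ t|) := by
          rw [(key hb' _ hdint).2, hsum2]
      _ = ξ * ∫ t in Set.Ico (0:ℝ) 1, |f₁ t - f₂ t| := by rw [hξ]; ring
  -- integrability of T f
  have hTint : ∀ f : ℝ → ℝ, IntegrableOn f (Set.Ico (0:ℝ) 1) →
      IntegrableOn (T f) (Set.Ico (0:ℝ) 1) := by
    intro f hf
    have hP := (key hb' f hf).1
    have hgi : IntegrableOn ((Set.Ico (1/2:ℝ) 1).indicator g) (Set.Ico (0:ℝ) 1) :=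
      ((integrable_indicator_iff measurableSet_Ico).2 hgint).integrableOn
    have hsum3 : IntegrableOn
        (fun t => (1 - ε) * Pb b f t + (1 - ε) * (Set.Ico (1/2:ℝ) 1).indicator g t)
        (Set.Ico (0:ℝ) 1) := (hP.const_mul _).add (hgi.const_mul _)
    exact IntegrableOn.congr_fun hsum3 (fun t _ => (hTapp f t).symm) measurableSet_Ico
  have hξ0 : 0 ≤ ξ := by rw [hξ]; nlinarith
  have hξ1 : ξ < 1 := by rw [hξ]; nlinarith
  refine ⟨fun f₁ f₂ h1 h2 => (hcontr f₁ f₂ h1 h2).le, hξ1, ?_⟩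
  -- fixed point via Banach
  set μ : Measure ℝ := volume.restrict (Set.Ico (0:ℝ) 1) with hμdef
  have hL1int : ∀ u : Lp ℝ 1 μ, Integrable (T ⇑u) μ := fun u =>
    hTint _ (L1.integrable_coeFn u)
  set Φ : Lp ℝ 1 μ → Lp ℝ 1 μ := fun u => Integrable.toL1 (T ⇑u) (hL1int u) with hΦdef
  have hdist : ∀ (u v : ℝ → ℝ) (hu : Integrable u μ) (hv : Integrable v μ),
      dist (hu.toL1 u) (hv.toL1 v) = ∫ t, |u t - v t| ∂μ := by
    intro u v hu hv
    rw [L1.dist_eq_integral_dist]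
    apply integral_congr_ae
    filter_upwards [hu.coeFn_toL1, hv.coeFn_toL1] with t h1 h2
    rw [h1, h2, Real.dist_eq]
  set K : NNReal := ⟨ξ, hξ0⟩ with hKdef
  have hKcoe : (K : ℝ) = ξ := rfl
  have hlip : ∀ u v : Lp ℝ 1 μ, dist (Φ u) (Φ v) ≤ K * dist u v := by
    intro u v
    have hu := L1.integrable_coeFn u
    have hv := L1.integrable_coeFn v
    have e1 : dist (Φ u) (Φ v) = ∫ t, |T ⇑u t - T ⇑v t| ∂μ := hdist _ _ _ _
    have e2 : dist u v = ∫ t, |⇑u t - ⇑v t| ∂μ := by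
      have h3 := hdist ⇑u ⇑v hu hv
      rwa [Integrable.toL1_coeFn, Integrable.toL1_coeFn] at h3
    rw [e1, e2, hKcoe]
    exact (hcontr ⇑u ⇑v hu hv).le
  have hCW : ContractingWith K Φ := by
    constructor
    · rw [← NNReal.coe_lt_coe, hKcoe, NNReal.coe_one]
      exact hξ1
    · exact LipschitzWith.of_dist_le_mul hlip
  haveI : Nonempty (Lp ℝ 1 μ) := ⟨0⟩
  set u₀ : Lp ℝ 1 μ := ContractingWith.fixedPoint Φ hCW with hu₀def
  have hfix : Φ u₀ = u₀ := hCW.fixedPoint_isFixedPt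
  refine ⟨⇑u₀, L1.integrable_coeFn u₀, ?_, ?_⟩
  · -- T ⇑u₀ =ᵐ ⇑u₀
    have h5 : ⇑(Integrable.toL1 (T ⇑u₀) (hL1int u₀)) =ᵐ[μ] T ⇑u₀ :=
      Integrable.coeFn_toL1 (hL1int u₀)
    have h6 : Integrable.toL1 (T ⇑u₀) (hL1int u₀) = u₀ := hfix
    rw [h6] at h5
    filter_upwards [h5] with t ht
    exact ht.symm
  · intro h hh hfixh
    have hint : Integrable h μ := hh
    set v : Lp ℝ 1 μ := Integrable.toL1 h hint with hvdef
    have hvh : ⇑v =ᵐ[μ] h := Integrable.coeFn_toL1 hint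
    have hTv : IntegrableOn (T ⇑v) (Set.Ico (0:ℝ) 1) := hTint _ (L1.integrable_coeFn v)
    have hTh : IntegrableOn (T h) (Set.Ico (0:ℝ) 1) := hTint _ hh
    have hzero2 : (∫ t in Set.Ico (0:ℝ) 1, |⇑v t - h t|) = 0 := by
      have hae : (fun t => |⇑v t - h t|) =ᵐ[μ] (fun _ => (0:ℝ)) := by
        filter_upwards [hvh] with t ht
        simp [ht]
      rw [integral_congr_ae hae, integral_zero]
    have hzero : (∫ t in Set.Ico (0:ℝ) 1, |T ⇑v t - T h t|) = 0 := by
      rw [hcontr ⇑v h (L1.integrable_coeFn v) hh, hzero2, mul_zero]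
    have hTae : T ⇑v =ᵐ[μ] T h := by
      have habs : Integrable (fun t => |T ⇑v t - T h t|) μ := (hTv.sub hTh).abs
      have h7 := (integral_eq_zero_iff_of_nonneg_ae
        (Filter.Eventually.of_forall fun t => abs_nonneg _) habs).1 hzero
      filter_upwards [h7] with t ht
      have : |T ⇑v t - T h t| = 0 := ht
      have := abs_eq_zero.1 this
      linarith
    have hΦv : Φ v = v := by
      have h8 : T ⇑v =ᵐ[μ] h := hTae.trans hfixh
      have h9 : Integrable.toL1 (T ⇑v) (hL1int v) = Integrable.toL1 h hint :=
        (Integrable.toL1_eq_toL1_iff _ _ _ _).2 h8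
      rw [hΦdef]
      exact h9
    have hvu : v = u₀ := hCW.fixedPoint_unique hΦv
    have hcoe : ⇑v =ᵐ[μ] ⇑u₀ := by rw [hvu]
    filter_upwards [hvh, hcoe] with t h1 h2
    rw [← h1, h2]
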